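/- For every positive integer l, let C = A_{2l+1} ∪ (2^{2l+1} − 2 + B_{2l+1}) and D = B_{2l+1} ∪ (2^{2l+1} − 2 + A_{2l+1}). Then C ∪ D = [0, 2^{2l+2} − 3], C ∩ D = {2^{2l+1} − 2, 2^{2l+1} − 1}, 0 ∈ C, and R_C(n) = R_D(n) for every nonnegative integer n. -/

import Mathlib

open Set

/-- R S n: number of pairs (s,s') with s,s' ∈ S, s < s', s+s' = n. -/
noncomputable def R (S : Set ℕ) (n : ℕ) : ℕ :=
  {p : ℕ × ℕ | p.1 ∈ S ∧ p.2 ∈ S ∧ p.1 < p.2 ∧ p.1 + p.2 = n}.ncard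

/-- Thue–Morse set: nonnegative integers with an even number of binary 1's. -/
def A : Set ℕ := {n | Even ((Nat.digits 2 n).count 1)}

def B : Set ℕ := Aᶜ

def Al (k : ℕ) : Set ℕ := A ∩ Set.Icc 0 (2 ^ k - 1)

def Bl (k : ℕ) : Set ℕ := B ∩ Set.Icc 0 (2 ^ k - 1)


def pc (n : ℕ) : ℕ := (Nat.digits 2 n).count 1

lemma pc_eq (n : ℕ) : pc n = pc (n / 2) + n % 2 := by
  rcases Nat.eq_zero_or_pos n with h | h
  · simp [h, pc]
  · rw [pc, Nat.digits_def' (by norm_num) h, List.count_cons]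
    have : n % 2 = 0 ∨ n % 2 = 1 := by omega
    rcases this with h2 | h2 <;> simp [h2, pc, Nat.add_comm]

def F : ℕ → ℕ → ℕ × ℕ
  | u, v =>
    if u = v then (u, v)
    else if u % 2 = v % 2 then
      (2 * (F (u/2) (v/2)).1 + u % 2, 2 * (F (u/2) (v/2)).2 + v % 2)
    else if u % 2 = 0 then (u+1, v-1) else (u-1, v+1)
  termination_by u v => u + v
  decreasing_by all_goals (simp_wf; omega)

lemma F_eq (u v : ℕ) : F u v = if u = v then (u, v)
    else if u % 2 = v % 2 then
      (2 * (F (u/2) (v/2)).1 + u % 2, 2 * (F (u/2) (v/2)).2 + v % 2)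
    else if u % 2 = 0 then (u+1, v-1) else (u-1, v+1) := by
  rw [F]

lemma F_add (u v : ℕ) : (F u v).1 + (F u v).2 = u + v := by
  induction u, v using F.induct with
  | case1 v => rw [F_eq, if_pos rfl]
  | case2 u v h1 h2 ih =>
    rw [F_eq, if_neg h1, if_pos h2]; simp only; omega
  | case3 u v h1 h2 h3 =>
    rw [F_eq, if_neg h1, if_neg h2, if_pos h3]; omega
  | case4 u v h1 h2 h3 =>
    rw [F_eq, if_neg h1, if_neg h2, if_neg h3]; omega

lemma F_ne (u v : ℕ) (h : u ≠ v) : (F u v).1 ≠ (F u v).2 := by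
  induction u, v using F.induct with
  | case1 v => exact absurd rfl h
  | case2 u v h1 h2 ih =>
    rw [F_eq, if_neg h1, if_pos h2]
    have := ih (by omega)
    simp only; omega
  | case3 u v h1 h2 h3 =>
    rw [F_eq, if_neg h1, if_neg h2, if_pos h3]; simp only; omega
  | case4 u v h1 h2 h3 =>
    rw [F_eq, if_neg h1, if_neg h2, if_neg h3]; simp only; omega

set_option maxHeartbeats 800000 in
lemma F_pc (u v : ℕ) (h : u ≠ v) :
    (Even (pc (F u v).1) ↔ ¬ Even (pc u)) ∧ (Even (pc (F u v).2) ↔ ¬ Even (pc v)) := by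
  induction u, v using F.induct with
  | case1 v => exact absurd rfl h
  | case2 u v h1 h2 ih =>
    obtain ⟨ih1, ih2⟩ := ih (by omega)
    rw [F_eq, if_neg h1, if_pos h2]
    simp only
    constructor
    · rw [pc_eq (2 * (F (u/2) (v/2)).1 + u % 2), pc_eq u]
      have e1 : (2 * (F (u/2) (v/2)).1 + u % 2) / 2 = (F (u/2) (v/2)).1 := by omega
      have e2 : (2 * (F (u/2) (v/2)).1 + u % 2) % 2 = u % 2 := by omega
      rw [e1, e2, Nat.even_add, Nat.even_add]
      tauto
    · rw [pc_eq (2 * (F (u/2) (v/2)).2 + v % 2), pc_eq v]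
      have e1 : (2 * (F (u/2) (v/2)).2 + v % 2) / 2 = (F (u/2) (v/2)).2 := by omega
      have e2 : (2 * (F (u/2) (v/2)).2 + v % 2) % 2 = v % 2 := by omega
      rw [e1, e2, Nat.even_add, Nat.even_add]
      tauto
  | case3 u v h1 h2 h3 =>
    rw [F_eq, if_neg h1, if_neg h2, if_pos h3]
    have hv : v % 2 = 1 := by omega
    simp only
    constructor
    · rw [pc_eq (u+1), pc_eq u]
      have e : (u+1)/2 = u/2 := by omega
      have h2' : (u+1) % 2 = 1 := by omega
      rw [e, h2', h3]
      simp [Nat.even_add_one]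
    · rw [pc_eq (v-1), pc_eq v]
      have e : (v-1)/2 = v/2 := by omega
      have h2' : (v-1) % 2 = 0 := by omega
      rw [e, h2', hv]
      simp [Nat.even_add_one]
  | case4 u v h1 h2 h3 =>
    rw [F_eq, if_neg h1, if_neg h2, if_neg h3]
    have hu : u % 2 = 1 := by omega
    have hv : v % 2 = 0 := by omega
    simp only
    constructor
    · rw [pc_eq (u-1), pc_eq u]
      have e : (u-1)/2 = u/2 := by omega
      have h2' : (u-1) % 2 = 0 := by omega
      rw [e, h2', hu]
      simp [Nat.even_add_one]
    · rw [pc_eq (v+1), pc_eq v]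
      have e : (v+1)/2 = v/2 := by omega
      have h2' : (v+1) % 2 = 1 := by omega
      rw [e, h2', hv]
      simp [Nat.even_add_one]

lemma F_invol (u v : ℕ) (h : u ≠ v) : F (F u v).1 (F u v).2 = (u, v) := by
  induction u, v using F.induct with
  | case1 v => exact absurd rfl h
  | case2 u v h1 h2 ih =>
    have hne : u / 2 ≠ v / 2 := by omega
    have ihe := ih hne
    have hne2 := F_ne (u/2) (v/2) hne
    rw [F_eq u v, if_neg h1, if_pos h2]
    simp only
    rw [F_eq (2 * (F (u/2) (v/2)).1 + u % 2) (2 * (F (u/2) (v/2)).2 + v % 2),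
      if_neg (by omega), if_pos (by omega)]
    have e1 : (2 * (F (u/2) (v/2)).1 + u % 2) / 2 = (F (u/2) (v/2)).1 := by omega
    have e2 : (2 * (F (u/2) (v/2)).2 + v % 2) / 2 = (F (u/2) (v/2)).2 := by omega
    rw [e1, e2, ihe]
    simp only
    have e3 : (2 * (F (u/2) (v/2)).1 + u % 2) % 2 = u % 2 := by omega
    have e4 : (2 * (F (u/2) (v/2)).2 + v % 2) % 2 = v % 2 := by omega
    rw [e3, e4]
    ext <;> simp <;> omega
  | case3 u v h1 h2 h3 =>
    have hv : v % 2 = 1 := by omega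
    rw [F_eq u v, if_neg h1, if_neg h2, if_pos h3]
    simp only
    rw [F_eq (u+1) (v-1), if_neg (by omega), if_neg (by omega), if_neg (by omega)]
    ext <;> simp <;> omega
  | case4 u v h1 h2 h3 =>
    have hu : u % 2 = 1 := by omega
    have hv : v % 2 = 0 := by omega
    rw [F_eq u v, if_neg h1, if_neg h2, if_neg h3]
    simp only
    rw [F_eq (u-1) (v+1), if_neg (by omega), if_neg (by omega), if_pos (by omega)]
    ext <;> simp <;> omega



lemma pc_zero : pc 0 = 0 := by simp [pc]

lemma pc_one : pc 1 = 1 := by rw [pc_eq]; simp [pc_zero]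

lemma pc_pow_add (k : ℕ) : ∀ t, t < 2^k → pc (2^k + t) = pc t + 1 := by
  induction k with
  | zero => intro t ht; interval_cases t; simpa [pc_zero] using pc_one
  | succ k ih =>
    intro t ht
    have e2 : 2^(k+1) = 2*2^k := by rw [pow_succ]; ring
    rw [pc_eq (2^(k+1) + t)]
    have e3 : (2^(k+1) + t) / 2 = 2^k + t/2 := by omega
    have e4 : (2^(k+1) + t) % 2 = t % 2 := by omega
    rw [e3, e4, ih (t/2) (by omega), pc_eq t]
    ring
lemma pc_pow (k : ℕ) : pc (2^k) = 1 := by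
  simpa [pc_zero] using pc_pow_add k 0 (by positivity)
lemma pc_pow_add_one (k : ℕ) (hk : 1 ≤ k) : pc (2^k + 1) = 2 := by
  rw [pc_pow_add k 1 (by have : 2^1 ≤ 2^k := Nat.pow_le_pow_right (by norm_num) hk; omega), pc_one]
lemma pc_pow_sub_one (k : ℕ) : pc (2^k - 1) = k := by
  induction k with
  | zero => simpa using pc_zero
  | succ k ih =>
    have e2 : 2^(k+1) = 2*2^k := by rw [pow_succ]; ring
    have h1 : 0 < 2^k := Nat.pow_pos (by norm_num)
    rw [pc_eq]
    have e3 : (2^(k+1) - 1) / 2 = 2^k - 1 := by omega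
    have e4 : (2^(k+1) - 1) % 2 = 1 := by omega
    rw [e3, e4, ih]
lemma pc_pow_sub_two (k : ℕ) (hk : 1 ≤ k) : pc (2^k - 2) = k - 1 := by
  have e2 : 2^k = 2*2^(k-1) := by rw [← pow_succ']; congr 1; omega
  have h1 : 0 < 2^(k-1) := Nat.pow_pos (by norm_num)
  rw [pc_eq]
  have e3 : (2^k - 2) / 2 = 2^(k-1) - 1 := by omega
  have e4 : (2^k - 2) % 2 = 0 := by omega
  rw [e3, e4, pc_pow_sub_one]; omega

lemma split2 (m x : ℕ) (hx : x < 2*m) : (x < m ∧ x % m = x) ∨ (m ≤ x ∧ x % m = x - m) := by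
  rcases lt_or_ge x m with h | h
  · exact Or.inl ⟨h, Nat.mod_eq_of_lt h⟩
  · refine Or.inr ⟨h, ?_⟩
    rw [Nat.mod_eq_sub_mod h, Nat.mod_eq_of_lt (by omega)]

lemma mod_ne (k u v : ℕ) (hu : u < 2^(k+1)) (hv : v < 2^(k+1)) (hne : u ≠ v)
    (hp : Even (pc u) ↔ Even (pc v)) : u % 2^k ≠ v % 2^k := by
  intro hmod
  have e2 : 2^(k+1) = 2*2^k := by rw [pow_succ]; ring
  rcases split2 (2^k) u (by omega) with ⟨h1, h2⟩ | ⟨h1, h2⟩ <;>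
    rcases split2 (2^k) v (by omega) with ⟨h3, h4⟩ | ⟨h3, h4⟩
  · omega
  · have hvv : v = 2^k + u := by omega
    rw [hvv, pc_pow_add k u h1, Nat.even_add_one] at hp
    tauto
  · have huu : u = 2^k + v := by omega
    rw [huu, pc_pow_add k v h3, Nat.even_add_one] at hp
    tauto
  · omega


lemma F_swap (u v : ℕ) : F v u = ((F u v).2, (F u v).1) := by
  induction u, v using F.induct with
  | case1 v => rw [F_eq, if_pos rfl]
  | case2 u v h1 h2 ih =>
    rw [F_eq v u, if_neg (by omega), if_pos (by omega),
        F_eq u v, if_neg h1, if_pos h2, ih]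
  | case3 u v h1 h2 h3 =>
    rw [F_eq v u, if_neg (by omega), if_neg (by omega), if_neg (by omega),
        F_eq u v, if_neg h1, if_neg h2, if_pos h3]
  | case4 u v h1 h2 h3 =>
    rw [F_eq v u, if_neg (by omega), if_neg (by omega), if_pos (by omega),
        F_eq u v, if_neg h1, if_neg h2, if_neg h3]

lemma mod_pow_succ (u s : ℕ) : u % 2^(s+1) = 2 * (u/2 % 2^s) + u % 2 := by
  have hp : 0 < 2^s := Nat.pow_pos (by norm_num)
  have hm : u / 2 % 2 ^ s < 2^s := Nat.mod_lt _ hp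
  have e2 : 2^(s+1) = 2*2^s := by rw [pow_succ]; ring
  calc u % 2^(s+1) = (2*(u/2) + u % 2) % (2*2^s) := by rw [Nat.div_add_mod, e2]
    _ = ((2*(u/2)) % (2*2^s) + (u % 2) % (2*2^s)) % (2*2^s) := by rw [Nat.add_mod]
    _ = (2*(u/2 % 2^s) + u % 2) % (2*2^s) := by
          rw [Nat.mul_mod_mul_left, Nat.mod_eq_of_lt (show u % 2 < 2*2^s by omega)]
    _ = 2 * (u/2 % 2^s) + u % 2 := Nat.mod_eq_of_lt (by omega)

lemma div_pow_succ (u s : ℕ) : u / 2^(s+1) = (u/2) / 2^s := by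
  rw [Nat.div_div_eq_div_mul, ← pow_succ']

lemma F_div (u v : ℕ) : ∀ t, u % 2^t ≠ v % 2^t →
    (F u v).1 / 2^t = u / 2^t ∧ (F u v).2 / 2^t = v / 2^t := by
  induction u, v using F.induct with
  | case1 v => intro t ht; exact absurd rfl ht
  | case2 u v h1 h2 ih =>
    intro t ht
    match t with
    | 0 => exact absurd (by simp [Nat.mod_one]) ht
    | s+1 =>
      have hmu := mod_pow_succ u s
      have hmv := mod_pow_succ v s
      have hih : u/2 % 2^s ≠ v/2 % 2^s := by omega
      obtain ⟨ih1, ih2⟩ := ih s hih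
      rw [F_eq, if_neg h1, if_pos h2]
      simp only
      constructor
      · rw [div_pow_succ, div_pow_succ u s]
        have e : (2 * (F (u/2) (v/2)).1 + u % 2) / 2 = (F (u/2) (v/2)).1 := by omega
        rw [e, ih1]
      · rw [div_pow_succ, div_pow_succ v s]
        have e : (2 * (F (u/2) (v/2)).2 + v % 2) / 2 = (F (u/2) (v/2)).2 := by omega
        rw [e, ih2]
  | case3 u v h1 h2 h3 =>
    intro t ht
    match t with
    | 0 => exact absurd (by simp [Nat.mod_one]) ht
    | s+1 =>
      rw [F_eq, if_neg h1, if_neg h2, if_pos h3]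
      simp only
      constructor
      · rw [div_pow_succ, div_pow_succ u s]
        have e : (u+1)/2 = u/2 := by omega
        rw [e]
      · rw [div_pow_succ, div_pow_succ v s]
        have e : (v-1)/2 = v/2 := by omega
        rw [e]
  | case4 u v h1 h2 h3 =>
    intro t ht
    match t with
    | 0 => exact absurd (by simp [Nat.mod_one]) ht
    | s+1 =>
      rw [F_eq, if_neg h1, if_neg h2, if_neg h3]
      simp only
      constructor
      · rw [div_pow_succ, div_pow_succ u s]
        have e : (u-1)/2 = u/2 := by omega
        rw [e]
      · rw [div_pow_succ, div_pow_succ v s]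
        have e : (v+1)/2 = v/2 := by omega
        rw [e]
def val (k x : ℕ) : ℕ := if x < 2^k then x else x - 2

def srt (p : ℕ × ℕ) : ℕ × ℕ := if p.1 ≤ p.2 then p else (p.2, p.1)

lemma srt_spec (a b : ℕ) (h : a ≠ b) :
    (srt (a, b) = (a, b) ∧ a < b) ∨ (srt (a, b) = (b, a) ∧ b < a) := by
  unfold srt
  dsimp only
  split_ifs with h1
  · exact Or.inl ⟨rfl, lt_of_le_of_ne h1 h⟩
  · exact Or.inr ⟨rfl, by omega⟩

lemma div_pow_eq_zero_iff (k x : ℕ) : x / 2^k = 0 ↔ x < 2^k :=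
  by rw [Nat.div_eq_zero_iff]; have := Nat.pow_pos (n := k) (show 0 < 2 by norm_num); omega

lemma div_pow_lt_two_iff (k x : ℕ) : x / 2^k < 2 ↔ x < 2^(k+1) := by
  rw [Nat.div_lt_iff_lt_mul (Nat.pow_pos (by norm_num)), pow_succ]; ring_nf

lemma two_le_pow {k : ℕ} (hk : 1 ≤ k) : 2 ≤ 2^k := by
  calc 2 = 2^1 := by norm_num
  _ ≤ 2^k := Nat.pow_le_pow_right (by norm_num) hk

lemma val_inj (k : ℕ) (hk : Odd k) {u v : ℕ} (hu : u < 2^(k+1)) (hv : v < 2^(k+1))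
    (hp : Even (pc u) ↔ Even (pc v)) (he : val k u = val k v) : u = v := by
  obtain ⟨m, hm⟩ := hk
  have hk1 : 1 ≤ k := by omega
  have h2 : 2 ≤ 2^k := two_le_pow hk1
  have hek : ¬ Even k := by rintro ⟨r, hr⟩; omega
  have hek1 : Even (k-1) := ⟨m, by omega⟩
  unfold val at he
  split_ifs at he with h3 h4 h4
  · exact he
  · exfalso
    have hv2 : v = 2^k ∨ v = 2^k + 1 := by omega
    rcases hv2 with rfl | rfl
    · have e1 : u = 2^k - 2 := by omega
      rw [e1, pc_pow_sub_two k hk1, pc_pow] at hp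
      exact Nat.not_even_one (hp.mp hek1)
    · have e1 : u = 2^k - 1 := by omega
      rw [e1, pc_pow_sub_one, pc_pow_add_one k hk1] at hp
      exact hek (hp.mpr ⟨1, rfl⟩)
  · exfalso
    have hu2 : u = 2^k ∨ u = 2^k + 1 := by omega
    rcases hu2 with rfl | rfl
    · have e1 : v = 2^k - 2 := by omega
      rw [e1, pc_pow_sub_two k hk1, pc_pow] at hp
      exact Nat.not_even_one (hp.mpr hek1)
    · have e1 : v = 2^k - 1 := by omega
      rw [e1, pc_pow_sub_one, pc_pow_add_one k hk1] at hp
      exact hek (hp.mp ⟨1, rfl⟩)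
  · omega

lemma G_mem (k u v : ℕ) (hu : u < 2^(k+1)) (hv : v < 2^(k+1))
    (hp : Even (pc u) ↔ Even (pc v)) (hlt : u < v) :
    (srt (F u v)).1 < 2^(k+1) ∧ (srt (F u v)).2 < 2^(k+1) ∧
    (Even (pc (srt (F u v)).1) ↔ ¬ Even (pc u)) ∧
    (Even (pc (srt (F u v)).2) ↔ ¬ Even (pc u)) ∧
    (srt (F u v)).1 < (srt (F u v)).2 ∧
    val k (srt (F u v)).1 + val k (srt (F u v)).2 = val k u + val k v ∧
    srt (F (srt (F u v)).1 (srt (F u v)).2) = (u, v) := by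
  have hne : u ≠ v := hlt.ne
  obtain ⟨hs1, hs2⟩ := F_pc u v hne
  have hadd := F_add u v
  have hne' := F_ne u v hne
  have hmod : u % 2^k ≠ v % 2^k := mod_ne k u v hu hv hne hp
  obtain ⟨hd1, hd2⟩ := F_div u v k hmod
  have hb1 : (F u v).1 < 2^(k+1) := by
    rw [← div_pow_lt_two_iff, hd1, div_pow_lt_two_iff]; exact hu
  have hb2 : (F u v).2 < 2^(k+1) := by
    rw [← div_pow_lt_two_iff, hd2, div_pow_lt_two_iff]; exact hv
  have hside1 : ((F u v).1 < 2^k ↔ u < 2^k) := by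
    rw [← div_pow_eq_zero_iff, ← div_pow_eq_zero_iff, hd1]
  have hside2 : ((F u v).2 < 2^k ↔ v < 2^k) := by
    rw [← div_pow_eq_zero_iff, ← div_pow_eq_zero_iff, hd2]
  have h1pos : (0:ℕ) < 2^k := Nat.pow_pos (by norm_num)
  have hvalsum : val k (F u v).1 + val k (F u v).2 = val k u + val k v := by
    have wlow : ∀ x : ℕ, x < 2^k → val k x = x := by
      intro x hx; unfold val; rw [if_pos hx]
    have whigh : ∀ x : ℕ, ¬ x < 2^k → val k x = x - 2 := by
      intro x hx; unfold val; rw [if_neg hx]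
    rcases Nat.lt_or_ge u (2^k) with h1 | h1 <;> rcases Nat.lt_or_ge v (2^k) with h2 | h2
    · rw [wlow u h1, wlow v h2, wlow _ (hside1.mpr h1), wlow _ (hside2.mpr h2)]; omega
    · have s2 : ¬ (F u v).2 < 2^k := by rw [hside2]; omega
      rw [wlow u h1, whigh v (by omega), wlow _ (hside1.mpr h1), whigh _ s2]; omega
    · have s1 : ¬ (F u v).1 < 2^k := by rw [hside1]; omega
      rw [whigh u (by omega), wlow v h2, whigh _ s1, wlow _ (hside2.mpr h2)]; omega
    · have s1 : ¬ (F u v).1 < 2^k := by rw [hside1]; omega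
      have s2 : ¬ (F u v).2 < 2^k := by rw [hside2]; omega
      rw [whigh u (by omega), whigh v (by omega), whigh _ s1, whigh _ s2]; omega
  have hinv : F (F u v).1 (F u v).2 = (u, v) := F_invol u v hne
  rcases srt_spec (F u v).1 (F u v).2 hne' with ⟨hq, hqlt⟩ | ⟨hq, hqlt⟩ <;>
    (have hq' : srt (F u v) = _ := hq; rw [hq'])
  · refine ⟨hb1, hb2, hs1, hs2.trans (not_congr hp).symm, hqlt, hvalsum, ?_⟩
    rw [hinv]
    unfold srt
    rw [if_pos (le_of_lt hlt)]
  · refine ⟨hb2, hb1, hs2.trans (not_congr hp).symm, hs1, hqlt, ?_, ?_⟩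
    · show val k (F u v).2 + val k (F u v).1 = val k u + val k v
      omega
    rw [F_swap, hinv]
    unfold srt
    dsimp only
    rw [if_neg (by omega)]

def PP (k : ℕ) (Q : ℕ → Prop) (n : ℕ) : Set (ℕ × ℕ) :=
  {p | p.1 < 2^(k+1) ∧ p.2 < 2^(k+1) ∧ Q p.1 ∧ Q p.2 ∧ p.1 < p.2 ∧ val k p.1 + val k p.2 = n}

lemma flip_ncard (k n : ℕ) :
    (PP k (fun u => Even (pc u)) n).ncard = (PP k (fun u => ¬ Even (pc u)) n).ncard := by
  set G : ℕ × ℕ → ℕ × ℕ := fun p => srt (F p.1 p.2) with hG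
  have hmapE : ∀ p ∈ PP k (fun u => Even (pc u)) n,
      G p ∈ PP k (fun u => ¬ Even (pc u)) n ∧ G (G p) = p := by
    rintro ⟨u, v⟩ ⟨h1, h2, h3, h4, h5, h6⟩
    obtain ⟨b1, b2, p1, p2, plt, vs, inv⟩ := G_mem k u v h1 h2 (iff_of_true h3 h4) h5
    refine ⟨⟨b1, b2, fun h => (p1.mp h) h3, fun h => (p2.mp h) h3, plt, by rw [vs]; exact h6⟩, ?_⟩
    exact inv
  have hmapO : ∀ p ∈ PP k (fun u => ¬ Even (pc u)) n,
      G p ∈ PP k (fun u => Even (pc u)) n ∧ G (G p) = p := by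
    rintro ⟨u, v⟩ ⟨h1, h2, h3, h4, h5, h6⟩
    obtain ⟨b1, b2, p1, p2, plt, vs, inv⟩ := G_mem k u v h1 h2 (iff_of_false h3 h4) h5
    refine ⟨⟨b1, b2, p1.mpr h3, p2.mpr h3, plt, by rw [vs]; exact h6⟩, ?_⟩
    exact inv
  have himg : G '' (PP k (fun u => Even (pc u)) n) = PP k (fun u => ¬ Even (pc u)) n := by
    apply Set.Subset.antisymm
    · rintro q ⟨p, hp, rfl⟩
      exact (hmapE p hp).1
    · intro q hq
      exact ⟨G q, (hmapO q hq).1, (hmapO q hq).2⟩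
  rw [← himg, Set.ncard_image_of_injOn]
  intro p hp q hq h
  have e1 := (hmapE p hp).2
  have e2 := (hmapE q hq).2
  rw [← e1, ← e2, h]

lemma R_eq_PP (k n : ℕ) (hk : Odd k) (Q : ℕ → Prop)
    (hQ : ∀ u v, Q u → Q v → (Even (pc u) ↔ Even (pc v)))
    (S : Set ℕ) (hS : ∀ x, x ∈ S ↔ ∃ u, u < 2^(k+1) ∧ Q u ∧ val k u = x) :
    R S n = (PP k Q n).ncard := by
  have hset : {p : ℕ × ℕ | p.1 ∈ S ∧ p.2 ∈ S ∧ p.1 < p.2 ∧ p.1 + p.2 = n}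
      = (fun p : ℕ × ℕ => srt (val k p.1, val k p.2)) '' (PP k Q n) := by
    apply Set.Subset.antisymm
    · rintro ⟨x, y⟩ ⟨hx, hy, hxy, hsum⟩
      obtain ⟨u, hu1, hu2, hu3⟩ := (hS x).mp hx
      obtain ⟨v, hv1, hv2, hv3⟩ := (hS y).mp hy
      have hne : u ≠ v := by rintro rfl; rw [hu3] at hv3; omega
      rcases hne.lt_or_gt with h | h
      · refine ⟨(u, v), ⟨hu1, hv1, hu2, hv2, h, by rw [hu3, hv3]; exact hsum⟩, ?_⟩
        show srt (val k u, val k v) = (x, y)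
        rw [hu3, hv3]
        rcases srt_spec x y (by omega) with ⟨hq, _⟩ | ⟨_, hq⟩
        · exact hq
        · omega
      · refine ⟨(v, u), ⟨hv1, hu1, hv2, hu2, h, by rw [hu3, hv3]; omega⟩, ?_⟩
        show srt (val k v, val k u) = (x, y)
        rw [hu3, hv3]
        rcases srt_spec y x (by omega) with ⟨_, hq⟩ | ⟨hq, _⟩
        · omega
        · exact hq
    · rintro q ⟨p, ⟨h1, h2, h3, h4, h5, h6⟩, rfl⟩
      have hab : val k p.1 ≠ val k p.2 :=
        fun h => absurd (val_inj k hk h1 h2 (hQ _ _ h3 h4) h) h5.ne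
      have m1 : val k p.1 ∈ S := (hS _).mpr ⟨p.1, h1, h3, rfl⟩
      have m2 : val k p.2 ∈ S := (hS _).mpr ⟨p.2, h2, h4, rfl⟩
      rcases srt_spec (val k p.1) (val k p.2) hab with ⟨hq, hlt⟩ | ⟨hq, hlt⟩ <;>
        (have hq' : (fun p : ℕ × ℕ => srt (val k p.1, val k p.2)) p = _ := hq; rw [hq'])
      · exact ⟨m1, m2, hlt, h6⟩
      · exact ⟨m2, m1, hlt, by omega⟩
  rw [R, hset, Set.ncard_image_of_injOn]
  rintro ⟨u, v⟩ ⟨h1, h2, h3, h4, h5, h6⟩ ⟨u', v'⟩ ⟨g1, g2, g3, g4, g5, g6⟩ heq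
  have heq' : srt (val k u, val k v) = srt (val k u', val k v') := heq
  have hab : val k u ≠ val k v := fun h => absurd (val_inj k hk h1 h2 (hQ _ _ h3 h4) h) h5.ne
  have hab' : val k u' ≠ val k v' := fun h => absurd (val_inj k hk g1 g2 (hQ _ _ g3 g4) h) g5.ne
  rcases srt_spec (val k u) (val k v) hab with ⟨hq, hlt⟩ | ⟨hq, hlt⟩ <;>
    rcases srt_spec (val k u') (val k v') hab' with ⟨hq2, hlt2⟩ | ⟨hq2, hlt2⟩ <;>
    rw [hq, hq2] at heq' <;>
    have e1 := congrArg Prod.fst heq' <;>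
    have e2 := congrArg Prod.snd heq' <;>
    dsimp only at e1 e2
  · have q1 := val_inj k hk h1 g1 (hQ _ _ h3 g3) e1
    have q2 := val_inj k hk h2 g2 (hQ _ _ h4 g4) e2
    rw [Prod.mk.injEq]; exact ⟨q1, q2⟩
  · have q1 := val_inj k hk h1 g2 (hQ _ _ h3 g4) e1
    have q2 := val_inj k hk h2 g1 (hQ _ _ h4 g3) e2
    exfalso; omega
  · have q1 := val_inj k hk h2 g1 (hQ _ _ h4 g3) e1
    have q2 := val_inj k hk h1 g2 (hQ _ _ h3 g4) e2
    exfalso; omega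
  · have q1 := val_inj k hk h2 g2 (hQ _ _ h4 g4) e1
    have q2 := val_inj k hk h1 g1 (hQ _ _ h3 g3) e2
    rw [Prod.mk.injEq]; exact ⟨q2, q1⟩
lemma mem_A_iff (x : ℕ) : x ∈ A ↔ Even (pc x) := Iff.rfl
lemma mem_B_iff (x : ℕ) : x ∈ B ↔ ¬ Even (pc x) := Iff.rfl

lemma C_char (k : ℕ) (hk : 1 ≤ k) (x : ℕ) :
    (x ∈ Al k ∪ ((fun y => 2^k - 2 + y) '' Bl k)) ↔
      ∃ u, u < 2^(k+1) ∧ Even (pc u) ∧ val k u = x := by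
  have h2 : 2 ≤ 2^k := two_le_pow hk
  have e2 : 2^(k+1) = 2*2^k := by rw [pow_succ]; ring
  constructor
  · rintro (⟨hxA, hxI⟩ | ⟨t, ⟨htB, htI⟩, rfl⟩)
    · rw [Set.mem_Icc] at hxI
      exact ⟨x, by omega, hxA, by unfold val; rw [if_pos (by omega)]⟩
    · rw [Set.mem_Icc] at htI
      refine ⟨2^k + t, by omega, ?_, ?_⟩
      · rw [pc_pow_add k t (by omega), Nat.even_add_one]
        exact fun h => htB h
      · show val k (2^k + t) = 2^k - 2 + t
        unfold val; rw [if_neg (by omega)]; omega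
  · rintro ⟨u, hu, hp, rfl⟩
    rcases Nat.lt_or_ge u (2^k) with h | h
    · left
      have hv : val k u = u := by unfold val; rw [if_pos h]
      rw [hv]
      exact ⟨hp, Set.mem_Icc.mpr ⟨by omega, by omega⟩⟩
    · right
      refine ⟨u - 2^k, ⟨?_, Set.mem_Icc.mpr ⟨by omega, by omega⟩⟩, ?_⟩
      · rw [mem_B_iff]
        have : u = 2^k + (u - 2^k) := by omega
        rw [this, pc_pow_add k _ (by omega), Nat.even_add_one] at hp
        exact hp
      · show 2^k - 2 + (u - 2^k) = val k u
        unfold val; rw [if_neg (by omega)]; omega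

lemma D_char (k : ℕ) (hk : 1 ≤ k) (x : ℕ) :
    (x ∈ Bl k ∪ ((fun y => 2^k - 2 + y) '' Al k)) ↔
      ∃ u, u < 2^(k+1) ∧ ¬ Even (pc u) ∧ val k u = x := by
  have h2 : 2 ≤ 2^k := two_le_pow hk
  have e2 : 2^(k+1) = 2*2^k := by rw [pow_succ]; ring
  constructor
  · rintro (⟨hxB, hxI⟩ | ⟨t, ⟨htA, htI⟩, rfl⟩)
    · rw [Set.mem_Icc] at hxI
      exact ⟨x, by omega, hxB, by unfold val; rw [if_pos (by omega)]⟩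
    · rw [Set.mem_Icc] at htI
      refine ⟨2^k + t, by omega, ?_, ?_⟩
      · rw [pc_pow_add k t (by omega), Nat.even_add_one]
        exact fun h => h htA
      · show val k (2^k + t) = 2^k - 2 + t
        unfold val; rw [if_neg (by omega)]; omega
  · rintro ⟨u, hu, hp, rfl⟩
    rcases Nat.lt_or_ge u (2^k) with h | h
    · left
      have hv : val k u = u := by unfold val; rw [if_pos h]
      rw [hv]
      exact ⟨hp, Set.mem_Icc.mpr ⟨by omega, by omega⟩⟩
    · right
      refine ⟨u - 2^k, ⟨?_, Set.mem_Icc.mpr ⟨by omega, by omega⟩⟩, ?_⟩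
      · rw [mem_A_iff]
        have : u = 2^k + (u - 2^k) := by omega
        rw [this, pc_pow_add k _ (by omega), Nat.even_add_one] at hp
        by_contra hcon
        exact hp (fun h => hcon h)
      · show 2^k - 2 + (u - 2^k) = val k u
        unfold val; rw [if_neg (by omega)]; omega


theorem stmt7 (l : ℕ) (hl : 0 < l)
    (C D : Set ℕ)
    (hC : C = Al (2 * l + 1) ∪ ((fun x => 2 ^ (2 * l + 1) - 2 + x) '' Bl (2 * l + 1)))
    (hD : D = Bl (2 * l + 1) ∪ ((fun x => 2 ^ (2 * l + 1) - 2 + x) '' Al (2 * l + 1))) :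
    C ∪ D = Set.Icc 0 (2 ^ (2 * l + 2) - 3) ∧
    C ∩ D = {2 ^ (2 * l + 1) - 2, 2 ^ (2 * l + 1) - 1} ∧
    (0 : ℕ) ∈ C ∧
    ∀ n : ℕ, R C n = R D n := by
  set k := 2 * l + 1 with hkdef
  have hk1 : 1 ≤ k := by omega
  have hkodd : Odd k := ⟨l, by omega⟩
  have h2 : 2 ≤ 2^k := two_le_pow hk1
  have e2 : 2^(k+1) = 2*2^k := by rw [pow_succ]; ring
  have e4 : (2:ℕ)^(2*l+2) = 2*2^k := by
    show (2:ℕ)^(2*l+1+1) = 2*2^k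
    rw [hkdef, pow_succ]; ring
  have hekm : Even (k - 1) := ⟨l, by omega⟩
  have hek : ¬ Even k := by rintro ⟨r, hr⟩; omega
  have hCx : ∀ x, x ∈ C ↔ ∃ u, u < 2^(k+1) ∧ Even (pc u) ∧ val k u = x := by
    intro x; rw [hC]; exact C_char k hk1 x
  have hDx : ∀ x, x ∈ D ↔ ∃ u, u < 2^(k+1) ∧ ¬ Even (pc u) ∧ val k u = x := by
    intro x; rw [hD]; exact D_char k hk1 x
  have hval_low : ∀ x : ℕ, x < 2^k → val k x = x := by
    intro x hx; unfold val; rw [if_pos hx]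
  have hval_high : ∀ x : ℕ, ¬ x < 2^k → val k x = x - 2 := by
    intro x hx; unfold val; rw [if_neg hx]
  refine ⟨?_, ?_, ?_, ?_⟩
  · -- union
    ext x
    simp only [Set.mem_union, Set.mem_Icc, hCx, hDx]
    constructor
    · rintro (⟨u, hu, _, rfl⟩ | ⟨u, hu, _, rfl⟩) <;>
      · refine ⟨Nat.zero_le _, ?_⟩
        rcases Nat.lt_or_ge u (2^k) with h | h
        · rw [hval_low u h]; omega
        · rw [hval_high u (by omega)]
          omega
    · rintro ⟨-, hx⟩
      have hx' : x ≤ 2^(k+1) - 3 := by omega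
      rcases Nat.lt_or_ge x (2^k) with h | h
      · rcases Nat.even_or_odd (pc x) with hp | hp
        · exact Or.inl ⟨x, by omega, hp, hval_low x h⟩
        · exact Or.inr ⟨x, by omega, Nat.not_even_iff_odd.mpr hp, hval_low x h⟩
      · have hb : x + 2 < 2^(k+1) := by omega
        have hv : val k (x+2) = x := by rw [hval_high (x+2) (by omega)]; omega
        rcases Nat.even_or_odd (pc (x+2)) with hp | hp
        · exact Or.inl ⟨x+2, hb, hp, hv⟩
        · exact Or.inr ⟨x+2, hb, Nat.not_even_iff_odd.mpr hp, hv⟩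
  · -- intersection
    ext x
    simp only [Set.mem_inter_iff, Set.mem_insert_iff, Set.mem_singleton_iff, hCx, hDx]
    constructor
    · rintro ⟨⟨u, hu, hpu, rfl⟩, ⟨v, hv, hpv, hvx⟩⟩
      have hne : u ≠ v := by rintro rfl; exact hpv hpu
      rcases Nat.lt_or_ge u (2^k) with h | h <;> rcases Nat.lt_or_ge v (2^k) with h' | h'
      · exfalso
        rw [hval_low u h, hval_low v h'] at hvx
        apply hpv; rw [hvx]; exact hpu
      · rw [hval_low u h] at hvx ⊢
        rw [hval_high v (by omega)] at hvx
        omega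
      · rw [hval_high u (by omega)] at hvx ⊢
        rw [hval_low v h'] at hvx
        omega
      · exfalso
        rw [hval_high u (by omega), hval_high v (by omega)] at hvx
        have huv : u = v := by omega
        apply hpv; rw [← huv]; exact hpu
    · rintro (rfl | rfl)
      · constructor
        · refine ⟨2^k - 2, by omega, ?_, hval_low _ (by omega)⟩
          rw [pc_pow_sub_two k hk1]; exact hekm
        · refine ⟨2^k, by omega, ?_, ?_⟩
          · rw [pc_pow]; exact Nat.not_even_one
          · rw [hval_high _ (by omega)]
      · constructor
        · refine ⟨2^k + 1, by omega, ?_, ?_⟩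
          · rw [pc_pow_add_one k hk1]; exact ⟨1, rfl⟩
          · rw [hval_high _ (by omega)]; omega
        · refine ⟨2^k - 1, by omega, ?_, hval_low _ (by omega)⟩
          rw [pc_pow_sub_one]; exact hek
  · -- 0 ∈ C
    exact (hCx 0).mpr ⟨0, by omega, by rw [pc_zero]; exact ⟨0, rfl⟩, hval_low 0 (by omega)⟩
  · -- R equality
    intro n
    rw [R_eq_PP k n hkodd (fun u => Even (pc u)) (fun u v h1 h2 => iff_of_true h1 h2) C hCx,
        R_eq_PP k n hkodd (fun u => ¬ Even (pc u)) (fun u v h1 h2 => iff_of_false h1 h2) D hDx]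
    exact flip_ncard k n
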